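/- Let a ∈ H_R with a[0] = 1 and let p^{(a)}(x) = (p_n^{(a)}(x))_{n≥0} be the associated sequence of polynomials defined by p_n^{(a)}(x) = n! ∑_{k=0}^{n} C(x,k) B_{n,k}(a_1,...,a_{n-k+1}). Then p^{(a)}(x+y) = p^{(a)}(x) ⋆ p^{(a)}(y), i.e., p_n^{(a)}(x+y) = ∑_{h=0}^{n} C(n,h) p_h^{(a)}(x) p_{n-h}^{(a)}(y) for all n. -/

import Mathlib

/-- The partial ordinary Bell polynomials `B_{n,k}(x_1, x_2, ...)`, defined by
`(∑_{m ≥ 1} x_m z^m)^k = ∑_{n ≥ k} B_{n,k} z^n`. -/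
noncomputable def obell {R : Type*} [CommRing R] (x : ℕ → R) (n k : ℕ) : R :=
  PowerSeries.coeff (R := R) n ((PowerSeries.mk fun m => if m = 0 then 0 else x m) ^ k)

/-- The exponential generating function of a sequence, over a `ℚ`-algebra. -/
noncomputable def egf {R : Type*} [CommRing R] [Algebra ℚ R] (a : ℕ → R) : PowerSeries R :=
  PowerSeries.mk fun n => algebraMap ℚ R (1 / n.factorial) * a n

/-- The binomial coefficient polynomial `C(x,k) = x(x-1)⋯(x-k+1)/k!`. -/
noncomputable def binomPoly {R : Type*} [CommRing R] [Algebra ℚ R] (k : ℕ) : Polynomial R :=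
  Polynomial.C (algebraMap ℚ R (1 / k.factorial)) *
    ∏ i ∈ Finset.range k, (Polynomial.X - (i : Polynomial R))

/-- The binomial-type polynomial sequence `p_n^{(a)}(x)`, the coefficients (times `n!`)
of `(A(t))^x = ∑_k C(x,k) (A(t)-1)^k`. -/
noncomputable def paseq {R : Type*} [CommRing R] [Algebra ℚ R] (a : ℕ → R) (n : ℕ) :
    Polynomial R :=
  (n.factorial : Polynomial R) *
    PowerSeries.coeff (R := Polynomial R) n
      (∑ k ∈ Finset.range (n + 1),
        PowerSeries.C (R := Polynomial R) (binomPoly k) *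
          (PowerSeries.map (Polynomial.C) (egf a) - 1) ^ k)

/- ### Auxiliary development -/

section Aux

open Finset Polynomial

/-- The value of the binomial coefficient polynomial at an element of a `ℚ`-algebra. -/
noncomputable def bp {S : Type*} [CommRing S] [Algebra ℚ S] (k : ℕ) (u : S) : S :=
  algebraMap ℚ S (1 / k.factorial) * ∏ i ∈ Finset.range k, (u - i)

lemma map_bp {S S' : Type*} [CommRing S] [Algebra ℚ S] [CommRing S'] [Algebra ℚ S']
    (f : S →ₐ[ℚ] S') (k : ℕ) (u : S) : f (bp k u) = bp k (f u) := by
  simp [bp, map_prod]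

lemma prod_cast_nat (m k : ℕ) : (∏ i ∈ range k, ((m : ℚ) - i)) = (m.descFactorial k : ℚ) := by
  induction k with
  | zero => simp
  | succ k ih =>
    rw [prod_range_succ, ih, Nat.descFactorial_succ, Nat.cast_mul]
    rcases le_or_gt k m with h | h
    · rw [Nat.cast_sub h]; ring
    · rw [Nat.descFactorial_eq_zero_iff_lt.mpr h]; push_cast; ring

lemma bp_nat (m k : ℕ) : bp k ((m : ℚ)) = (m.choose k : ℚ) := by
  rw [bp, prod_cast_nat, Nat.descFactorial_eq_factorial_mul_choose]
  have : (k.factorial : ℚ) ≠ 0 := by exact_mod_cast k.factorial_ne_zero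
  push_cast
  field_simp

lemma nat_funext {A : Type*} [CommRing A] [IsDomain A] [CharZero A] {p q : Polynomial A}
    (h : ∀ m : ℕ, p.eval (m : A) = q.eval (m : A)) : p = q := by
  rw [← sub_eq_zero]
  apply Polynomial.eq_zero_of_infinite_isRoot
  apply Set.Infinite.mono (s := Set.range (Nat.cast : ℕ → A))
  · rintro x ⟨m, rfl⟩
    simp [Polynomial.IsRoot, h m]
  · exact Set.infinite_range_of_injective Nat.cast_injective

lemma vander_nat (k m l : ℕ) :
    bp k ((m : ℚ) + (l : ℚ)) =
      ∑ ij ∈ Finset.HasAntidiagonal.antidiagonal k, bp ij.1 (m : ℚ) * bp ij.2 (l : ℚ) := by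
  rw [← Nat.cast_add, bp_nat, Nat.add_choose_eq]
  push_cast
  exact Finset.sum_congr rfl fun ij _ => by rw [bp_nat, bp_nat]

lemma vander_polyX (k l : ℕ) :
    bp k ((X : ℚ[X]) + (l : ℚ[X])) =
      ∑ ij ∈ Finset.HasAntidiagonal.antidiagonal k, bp ij.1 (X : ℚ[X]) * bp ij.2 ((l : ℚ[X])) := by
  apply nat_funext; intro m
  have h1 : ∀ p : ℚ[X], p.eval ((m : ℕ) : ℚ) = Polynomial.aeval ((m : ℕ) : ℚ) p := by
    intro p; rw [Polynomial.coe_aeval_eq_eval]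
  rw [h1, h1, map_bp, map_sum]
  simp only [map_add, aeval_X, map_natCast, map_mul, map_bp]
  exact vander_nat k m l

lemma vander_T (k : ℕ) :
    bp k ((Polynomial.C X + X : (ℚ[X])[X])) =
      ∑ ij ∈ Finset.HasAntidiagonal.antidiagonal k,
        bp ij.1 (Polynomial.C X : (ℚ[X])[X]) * bp ij.2 (Polynomial.X : (ℚ[X])[X]) := by
  apply nat_funext; intro l
  have h1 : ∀ p : (ℚ[X])[X], p.eval ((l : ℕ) : ℚ[X]) =
      (Polynomial.aeval ((l : ℕ) : ℚ[X])).restrictScalars ℚ p := by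
    intro p; simp [Polynomial.coe_aeval_eq_eval]
  rw [h1, h1, map_bp, map_sum]
  simp only [map_add, AlgHom.coe_restrictScalars, aeval_X, aeval_C, map_natCast, map_mul, map_bp]
  simpa using vander_polyX k l

/-- The Chu–Vandermonde identity in an arbitrary commutative `ℚ`-algebra. -/
lemma vander {S : Type*} [CommRing S] [Algebra ℚ S] (k : ℕ) (u v : S) :
    bp k (u + v) = ∑ ij ∈ Finset.HasAntidiagonal.antidiagonal k, bp ij.1 u * bp ij.2 v := by
  have h := congrArg (Polynomial.aevalTower (Polynomial.aeval u) v) (vander_T k)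
  simpa [map_bp, map_sum, map_mul, map_add, aevalTower_X, aevalTower_C, aeval_X] using h

variable {R : Type*} [CommRing R] [Algebra ℚ R]

lemma aeval_binomPoly (k : ℕ) (φ : MvPolynomial (Fin 2) R) :
    Polynomial.aeval φ (binomPoly k : Polynomial R) = bp k φ := by
  rw [binomPoly, bp, map_mul, Polynomial.aeval_C,
    ← IsScalarTower.algebraMap_apply ℚ R (MvPolynomial (Fin 2) R), map_prod]
  congr 1
  refine Finset.prod_congr rfl fun i _ => ?_
  rw [map_sub, Polynomial.aeval_X, map_natCast]

/-- The generating series `∑_{k ≤ N} C(φ, k) (E(t) - 1)^k` over `MvPolynomial (Fin 2) R`. -/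
noncomputable def Fser (a : ℕ → R) (N : ℕ) (φ : MvPolynomial (Fin 2) R) :
    PowerSeries (MvPolynomial (Fin 2) R) :=
  ∑ k ∈ Finset.range (N + 1),
    PowerSeries.C (bp k φ) *
      (PowerSeries.map (algebraMap R (MvPolynomial (Fin 2) R)) (egf a) - 1) ^ k

lemma aeval_paseq (a : ℕ → R) (n : ℕ) (φ : MvPolynomial (Fin 2) R) :
    Polynomial.aeval φ (paseq a n) =
      (n.factorial : MvPolynomial (Fin 2) R) * PowerSeries.coeff n (Fser a n φ) := by
  rw [paseq, map_mul, map_natCast, Fser]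
  congr 1
  have hc : ∀ (F : PowerSeries (Polynomial R)),
      Polynomial.aeval φ (PowerSeries.coeff n F) =
        PowerSeries.coeff n
          (PowerSeries.map
            (Polynomial.aeval φ : Polynomial R →ₐ[R] MvPolynomial (Fin 2) R).toRingHom F) :=
    fun F => rfl
  rw [hc]
  simp only [map_sum]
  refine Finset.sum_congr rfl fun k _ => ?_
  rw [map_mul, map_pow, PowerSeries.map_C, map_sub, map_one]
  have h2 : ((Polynomial.aeval φ : Polynomial R →ₐ[R] MvPolynomial (Fin 2) R) :
      Polynomial R →+* MvPolynomial (Fin 2) R).comp (Polynomial.C) =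
      algebraMap R (MvPolynomial (Fin 2) R) := RingHom.ext fun r => by simp
  have hmap : PowerSeries.map ((Polynomial.aeval φ : Polynomial R →ₐ[R] MvPolynomial (Fin 2) R) :
      Polynomial R →+* MvPolynomial (Fin 2) R) (PowerSeries.map (Polynomial.C) (egf a)) =
      PowerSeries.map (algebraMap R (MvPolynomial (Fin 2) R)) (egf a) := by
    rw [← h2, PowerSeries.map_comp]; rfl
  simp only [AlgHom.toRingHom_eq_coe, RingHom.coe_coe] at hmap ⊢
  rw [hmap, aeval_binomPoly]

lemma coeff_E_pow (a : ℕ → R) (ha : a 0 = 1) {k m : ℕ} (h : m < k) :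
    PowerSeries.coeff m
      ((PowerSeries.map (algebraMap R (MvPolynomial (Fin 2) R)) (egf a) - 1) ^ k) = 0 := by
  have h0 : PowerSeries.constantCoeff (R := MvPolynomial (Fin 2) R)
      (PowerSeries.map (algebraMap R (MvPolynomial (Fin 2) R)) (egf a) - 1) = 0 := by
    rw [map_sub, map_one]
    have : PowerSeries.constantCoeff (egf a) = 1 := by
      rw [egf, PowerSeries.constantCoeff_mk]
      simp [ha]
    rw [show PowerSeries.constantCoeff (R := MvPolynomial (Fin 2) R)
        (PowerSeries.map (algebraMap R (MvPolynomial (Fin 2) R)) (egf a)) =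
        algebraMap R (MvPolynomial (Fin 2) R) (PowerSeries.constantCoeff (egf a)) from rfl,
      this, map_one, sub_self]
  obtain ⟨ψ, hψ⟩ := PowerSeries.X_dvd_iff.mpr h0
  rw [hψ, mul_pow, PowerSeries.coeff_mul]
  refine Finset.sum_eq_zero fun p hp => ?_
  have hp1 : p.1 + p.2 = m := Finset.HasAntidiagonal.mem_antidiagonal.mp hp
  rw [PowerSeries.coeff_X_pow, if_neg (by omega), zero_mul]

lemma coeff_Fser (a : ℕ → R) (ha : a 0 = 1) (φ : MvPolynomial (Fin 2) R) {N m : ℕ}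
    (hmN : m ≤ N) :
    PowerSeries.coeff m (Fser a m φ) = PowerSeries.coeff m (Fser a N φ) := by
  rw [Fser, Fser, map_sum, map_sum]
  apply Finset.sum_subset (Finset.range_subset_range.mpr (by omega))
  intro k _ hk2
  have hmk : m < k := by
    simp only [Finset.mem_range] at hk2; omega
  rw [PowerSeries.coeff_C_mul, coeff_E_pow a ha hmk, mul_zero]

open MvPolynomial in
lemma key_coeff (a : ℕ → R) (ha : a 0 = 1) (n : ℕ) :
    PowerSeries.coeff n (Fser a n (X 0 + X 1 : MvPolynomial (Fin 2) R)) =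
      PowerSeries.coeff n
        (Fser a n (X 0 : MvPolynomial (Fin 2) R) * Fser a n (X 1 : MvPolynomial (Fin 2) R)) := by
  classical
  set S := MvPolynomial (Fin 2) R with hS
  set E : PowerSeries S := PowerSeries.map (algebraMap R S) (egf a) - 1 with hEdef
  set g : ℕ × ℕ → S := fun p =>
    bp p.1 (X 0 : S) * bp p.2 (X 1 : S) * PowerSeries.coeff n (E ^ (p.1 + p.2)) with hg
  have hg0 : ∀ p : ℕ × ℕ, n < p.1 + p.2 → g p = 0 := by
    intro p hp
    rw [hg]
    simp only
    rw [coeff_E_pow a ha hp, mul_zero]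
  have hL : PowerSeries.coeff n (Fser a n (X 0 + X 1 : S)) =
      ∑ k ∈ Finset.range (n + 1), ∑ ij ∈ Finset.HasAntidiagonal.antidiagonal k, g ij := by
    rw [Fser, map_sum]
    refine Finset.sum_congr rfl fun k _ => ?_
    rw [PowerSeries.coeff_C_mul, vander k (X 0 : S) (X 1 : S), Finset.sum_mul]
    refine Finset.sum_congr rfl fun ij hij => ?_
    have hk : ij.1 + ij.2 = k := Finset.HasAntidiagonal.mem_antidiagonal.mp hij
    rw [hg]
    simp only
    rw [hk]
  have hR : PowerSeries.coeff n (Fser a n (X 0 : S) * Fser a n (X 1 : S)) =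
      ∑ i ∈ Finset.range (n + 1), ∑ j ∈ Finset.range (n + 1), g (i, j) := by
    rw [Fser, Fser, Finset.sum_mul_sum]
    simp only [map_sum]
    refine Finset.sum_congr rfl fun i _ => Finset.sum_congr rfl fun j _ => ?_
    rw [show (PowerSeries.C (bp i (X 0 : S)) * E ^ i) *
        (PowerSeries.C (bp j (X 1 : S)) * E ^ j) =
        PowerSeries.C (bp i (X 0 : S)) * (PowerSeries.C (bp j (X 1 : S)) * E ^ (i + j)) by
      rw [pow_add]; ring]
    rw [PowerSeries.coeff_C_mul, PowerSeries.coeff_C_mul, hg]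
    simp only
    ring
  rw [hL, hR]
  have hdisj : (↑(Finset.range (n + 1)) : Set ℕ).PairwiseDisjoint Finset.HasAntidiagonal.antidiagonal := by
    intro k _ l _ hkl
    refine Finset.disjoint_left.mpr fun p hp hq => hkl ?_
    rw [← Finset.HasAntidiagonal.mem_antidiagonal.mp hp, Finset.HasAntidiagonal.mem_antidiagonal.mp hq]
  rw [← Finset.sum_biUnion hdisj, ← Finset.sum_product']
  apply Finset.sum_subset
  · intro p hp
    simp only [Finset.mem_biUnion, Finset.mem_range, Finset.HasAntidiagonal.mem_antidiagonal] at hp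
    obtain ⟨k, hk, hpk⟩ := hp
    simp only [Finset.mem_product, Finset.mem_range]
    omega
  · intro p hp hnp
    apply hg0
    simp only [Finset.mem_biUnion, Finset.mem_range, Finset.HasAntidiagonal.mem_antidiagonal] at hnp
    by_contra hle
    exact hnp ⟨p.1 + p.2, by omega, rfl⟩

end Aux

open MvPolynomial in
/-- The binomial-type property: `p_n^{(a)}(x+y) = ∑_h C(n,h) p_h^{(a)}(x) p_{n-h}^{(a)}(y)`,
as an identity of polynomials in two variables. -/
theorem paseq_binomial_type {R : Type*} [CommRing R] [Algebra ℚ R] (a : ℕ → R)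
    (ha : a 0 = 1) (n : ℕ) :
    Polynomial.aeval (X 0 + X 1 : MvPolynomial (Fin 2) R) (paseq a n) =
      ∑ h ∈ Finset.range (n + 1), (n.choose h : MvPolynomial (Fin 2) R) *
        Polynomial.aeval (X 0 : MvPolynomial (Fin 2) R) (paseq a h) *
        Polynomial.aeval (X 1 : MvPolynomial (Fin 2) R) (paseq a (n - h)) := by
  classical
  set S := MvPolynomial (Fin 2) R with hS
  rw [aeval_paseq, key_coeff a ha n]
  have hrhs : ∀ h ∈ Finset.range (n + 1),
      (n.choose h : S) * Polynomial.aeval (X 0 : S) (paseq a h) *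
        Polynomial.aeval (X 1 : S) (paseq a (n - h)) =
      (n.factorial : S) *
        (PowerSeries.coeff h (Fser a n (X 0 : S)) *
          PowerSeries.coeff (n - h) (Fser a n (X 1 : S))) := by
    intro h hh
    have hh' : h ≤ n := by simp only [Finset.mem_range] at hh; omega
    rw [aeval_paseq, aeval_paseq, coeff_Fser a ha _ hh', coeff_Fser a ha _ (by omega : n - h ≤ n)]
    have hfact : (n.choose h : S) * (h.factorial : S) * ((n - h).factorial : S) =
        (n.factorial : S) := by
      rw [← Nat.cast_mul, ← Nat.cast_mul, Nat.choose_mul_factorial_mul_factorial hh']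
    calc (n.choose h : S) * ((h.factorial : S) * PowerSeries.coeff h (Fser a n (X 0 : S))) *
          (((n - h).factorial : S) * PowerSeries.coeff (n - h) (Fser a n (X 1 : S)))
        = ((n.choose h : S) * (h.factorial : S) * ((n - h).factorial : S)) *
          (PowerSeries.coeff h (Fser a n (X 0 : S)) *
            PowerSeries.coeff (n - h) (Fser a n (X 1 : S))) := by ring
      _ = _ := by rw [hfact]
  rw [Finset.sum_congr rfl hrhs, ← Finset.mul_sum]
  congr 1
  rw [PowerSeries.coeff_mul, Finset.Nat.sum_antidiagonal_eq_sum_range_succ_mk]
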